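/- Let S = F_q[[t]] with q odd, n ≥ 5, and let Q, Q' ∈ S[X_0, …, X_n] be homogeneous of degree 2 forming a semistable pencil whose generic fiber {Q_K = Q'_K = 0} ⊂ P^n_K (K = F_q((t))) is a smooth complete intersection of two quadrics. Let Q_0, Q_0' be the reductions modulo t. Then the closed fiber contains no linear subspace of dimension n−2 defined over F_q: there do not exist two linearly independent linear forms L_1, L_2 ∈ F_q[X_0, …, X_n] such that both Q_0 and Q_0' lie in the ideal generated by L_1 and L_2. -/

import Mathlib

noncomputable section

open MvPolynomial

/-- The linear change of coordinates `X i ↦ ∑ j, M i j • X j` applied to a polynomial. -/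
def changeCoords {R : Type} [CommRing R] {m : ℕ}
    (M : Matrix (Fin m) (Fin m) R) (F : MvPolynomial (Fin m) R) : MvPolynomial (Fin m) R :=
  aeval (fun i => ∑ j, C (M i j) * X j) F

/-- The Plücker coordinate `a_{IJ}` of the wedge `F ∧ G` of two polynomials, in the basis of
wedges of monomials. -/
def wedgeCoeff {R : Type} [CommRing R] {m : ℕ}
    (F G : MvPolynomial (Fin m) R) (I J : (Fin m) →₀ ℕ) : R :=
  coeff I F * coeff J G - coeff J F * coeff I G

/-- `PencilMultGE t F G w μ` says the multiplicity of the pencil spanned by `F, G` at the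
weight system `w` is at least `μ`: for every pair `I ≠ J` with `a_{IJ} ≠ 0` one has
`v_t(a_{IJ}) + ∑ j, w j * (I j + J j) ≥ μ`. -/
def PencilMultGE {R : Type} [CommRing R] {m : ℕ} (t : R)
    (F G : MvPolynomial (Fin m) R) (w : Fin m → ℤ) (μ : ℤ) : Prop :=
  ∀ I J : (Fin m) →₀ ℕ, I ≠ J → wedgeCoeff F G I J ≠ 0 →
    ∀ k : ℕ, (k : ℤ) ≤ μ - ∑ j, w j * ((I j : ℤ) + (J j : ℤ)) → t ^ k ∣ wedgeCoeff F G I J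

/-- Kollár-style semistability for a pencil of degree-`δ` forms over a discrete valuation ring
with uniformizer `t`: for every coordinate change with unit determinant over the DVR and every
weight system `W`, `mult_W (F, G) ≤ 2δ(∑ w_i)/m`. -/
def PencilSemistable {R : Type} [CommRing R] {m : ℕ} (t : R) (δ : ℕ)
    (F G : MvPolynomial (Fin m) R) : Prop :=
  ∀ M : Matrix (Fin m) (Fin m) R, IsUnit M.det →
    ∀ (w : Fin m → ℤ) (μ : ℤ),
      PencilMultGE t (changeCoords M F) (changeCoords M G) w μ →
      (m : ℤ) * μ ≤ 2 * (δ : ℤ) * ∑ j, w j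

/-- The canonical map from `F_q[[t]]` to a fixed algebraic closure of `F_q((t))`. -/
def toOmega (Fq : Type) [Field Fq] :
    PowerSeries Fq →+* AlgebraicClosure (LaurentSeries Fq) :=
  (algebraMap (LaurentSeries Fq) (AlgebraicClosure (LaurentSeries Fq))).comp
    (algebraMap (PowerSeries Fq) (LaurentSeries Fq))

/-- The generic fiber of the pencil `{Q = Q' = 0}` over `F_q((t))` is a smooth complete
intersection of two quadrics: `Q_K, Q'_K` are linearly independent and the Jacobian matrix of
`(Q, Q')` has rank `2` (linearly independent gradients) at every nontrivial common zero over
an algebraic closure of `F_q((t))`. -/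
def SmoothCIGenericFiber (Fq : Type) [Field Fq] {m : ℕ}
    (Q Q' : MvPolynomial (Fin m) (PowerSeries Fq)) : Prop :=
  LinearIndependent (LaurentSeries Fq)
    ![MvPolynomial.map (algebraMap (PowerSeries Fq) (LaurentSeries Fq)) Q,
      MvPolynomial.map (algebraMap (PowerSeries Fq) (LaurentSeries Fq)) Q'] ∧
  ∀ a : Fin m → AlgebraicClosure (LaurentSeries Fq), a ≠ 0 →
    eval a (MvPolynomial.map (toOmega Fq) Q) = 0 →
    eval a (MvPolynomial.map (toOmega Fq) Q') = 0 →
    LinearIndependent (AlgebraicClosure (LaurentSeries Fq))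
      ![fun i => eval a (pderiv i (MvPolynomial.map (toOmega Fq) Q)),
        fun i => eval a (pderiv i (MvPolynomial.map (toOmega Fq) Q'))]


section Helpers

lemma degree_one_single {σ : Type*} (d : σ →₀ ℕ) (hd : Finsupp.degree d = 1) :
    ∃ i, d = Finsupp.single i 1 := by
  classical
  have h0 : d ≠ 0 := by rintro rfl; simp at hd
  obtain ⟨i, hi⟩ := Finsupp.support_nonempty_iff.mpr h0
  refine ⟨i, ?_⟩
  have hile : d i ≤ 1 := hd ▸ Finsupp.le_degree i d
  have hine : d i ≠ 0 := Finsupp.mem_support_iff.mp hi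
  ext j
  rcases eq_or_ne j i with rfl | hj
  · simp only [Finsupp.single_eq_same]; omega
  · rw [Finsupp.single_eq_of_ne hj]
    by_contra hne
    have hjs : j ∈ d.support := Finsupp.mem_support_iff.mpr hne
    have hsub : ({i, j} : Finset σ) ⊆ d.support := by
      intro x hx
      simp only [Finset.mem_insert, Finset.mem_singleton] at hx
      rcases hx with rfl | rfl <;> assumption
    have hsum : d i + d j ≤ Finsupp.degree d := by
      rw [← Finset.sum_pair hj.symm]
      exact Finset.sum_le_sum_of_subset hsub
    rw [hd] at hsum
    omega

lemma homog_one_decomp {m : ℕ} {K : Type*} [CommRing K] {p : MvPolynomial (Fin m) K}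
    (hp : p.IsHomogeneous 1) :
    p = ∑ i, MvPolynomial.C (MvPolynomial.coeff (Finsupp.single i 1) p) * MvPolynomial.X i := by
  classical
  ext d
  rw [MvPolynomial.coeff_sum]
  simp only [MvPolynomial.coeff_C_mul, MvPolynomial.coeff_X']
  by_cases hd : MvPolynomial.coeff d p = 0
  · rw [hd]
    refine (Finset.sum_eq_zero fun i _ => ?_).symm
    split_ifs with h
    · rw [h, hd, zero_mul]
    · exact mul_zero _
  · have hdeg : Finsupp.degree d = 1 := by
      rw [Finsupp.degree_eq_weight_one]; exact hp hd
    obtain ⟨i₀, rfl⟩ := degree_one_single d hdeg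
    rw [Finset.sum_eq_single i₀]
    · simp
    · intro j _ hj
      have hne : Finsupp.single j 1 ≠ Finsupp.single i₀ (1 : ℕ) := fun h =>
        hj (Finsupp.single_left_injective one_ne_zero h)
      simp [hne]
    · intro h; exact absurd (Finset.mem_univ i₀) h

lemma exists_matrix_vecMul {K : Type} [Field K] {m : ℕ} (z o : Fin m)
    (h01 : z ≠ o) (v₁ v₂ : Fin m → K)
    (hli : LinearIndependent K ![v₁, v₂]) :
    ∃ M₀ : Matrix (Fin m) (Fin m) K, IsUnit M₀.det ∧
      Matrix.vecMul v₁ M₀ = Pi.single z 1 ∧ Matrix.vecMul v₂ M₀ = Pi.single o 1 := by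
  classical
  set s : Set (Fin m → K) := Set.range ![v₁, v₂] with hs_def
  have hs : LinearIndepOn K id s := (linearIndepOn_id_range_iff hli.injective).mpr hli
  let b := Module.Basis.extend hs
  let pb := Pi.basisFun K (Fin m)
  let e : hs.extend (Set.subset_univ s) ≃ Fin m := b.indexEquiv pb
  have hne : v₁ ≠ v₂ := by
    intro h
    have h2 : ((0 : Fin 2) : Fin 2) = 1 := hli.injective (by simp [h])
    simp at h2
  have hv1s : v₁ ∈ hs.extend (Set.subset_univ s) :=
    hs.subset_extend _ ⟨0, by simp⟩
  have hv2s : v₂ ∈ hs.extend (Set.subset_univ s) :=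
    hs.subset_extend _ ⟨1, by simp⟩
  let i₁ : hs.extend (Set.subset_univ s) := ⟨v₁, hv1s⟩
  let i₂ : hs.extend (Set.subset_univ s) := ⟨v₂, hv2s⟩
  have hi12 : i₁ ≠ i₂ := fun h => hne (congrArg Subtype.val h)
  have hab : e i₁ ≠ e i₂ := fun h => hi12 (e.injective h)
  have hc0 : Equiv.swap (e i₁) z (e i₂) ≠ z := by
    intro h
    exact hab (Equiv.injective _ ((Equiv.swap_apply_left _ _).trans h.symm))
  let e' : hs.extend (Set.subset_univ s) ≃ Fin m :=
    (e.trans (Equiv.swap (e i₁) z)).trans (Equiv.swap (Equiv.swap (e i₁) z (e i₂)) o)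
  have he'1 : e' i₁ = z := by
    show Equiv.swap (Equiv.swap (e i₁) z (e i₂)) o (Equiv.swap (e i₁) z (e i₁)) = z
    rw [Equiv.swap_apply_left]
    exact Equiv.swap_apply_of_ne_of_ne (Ne.symm hc0) h01
  have he'2 : e' i₂ = o := by
    show Equiv.swap (Equiv.swap (e i₁) z (e i₂)) o (Equiv.swap (e i₁) z (e i₂)) = o
    exact Equiv.swap_apply_left _ _
  let φ : (Fin m → K) ≃ₗ[K] (Fin m → K) := b.equiv pb e'
  have hφ1 : φ v₁ = Pi.single z 1 := by
    have hb : b i₁ = v₁ := Module.Basis.extend_apply_self hs i₁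
    rw [← hb, Module.Basis.equiv_apply, he'1]
    ext j
    simp [pb, Pi.single_apply]
  have hφ2 : φ v₂ = Pi.single o 1 := by
    have hb : b i₂ = v₂ := Module.Basis.extend_apply_self hs i₂
    rw [← hb, Module.Basis.equiv_apply, he'2]
    ext j
    simp [pb, Pi.single_apply]
  set A := LinearMap.toMatrix' (φ : (Fin m → K) →ₗ[K] (Fin m → K)) with hA
  have hAdet : IsUnit A.det := by
    have hAB : A * LinearMap.toMatrix' (φ.symm : (Fin m → K) →ₗ[K] (Fin m → K)) = 1 := by
      rw [← LinearMap.toMatrix'_comp]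
      simp
    exact IsUnit.of_mul_eq_one _ (by rw [← Matrix.det_mul, hAB, Matrix.det_one])
  refine ⟨A.transpose, by rwa [Matrix.det_transpose], ?_, ?_⟩
  · rw [Matrix.vecMul_transpose, ← Matrix.toLin'_apply, hA, Matrix.toLin'_toMatrix']
    exact hφ1
  · rw [Matrix.vecMul_transpose, ← Matrix.toLin'_apply, hA, Matrix.toLin'_toMatrix']
    exact hφ2

lemma changeCoords_map_constantCoeff {K : Type} [Field K] {m : ℕ}
    (M₀ : Matrix (Fin m) (Fin m) K) (F : MvPolynomial (Fin m) (PowerSeries K)) :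
    MvPolynomial.map (PowerSeries.constantCoeff (R := K))
      (changeCoords (M₀.map (PowerSeries.C (R := K))) F)
      = aeval (fun i => ∑ j, MvPolynomial.C (M₀ i j) * MvPolynomial.X j)
          (MvPolynomial.map (PowerSeries.constantCoeff (R := K)) F) := by
  have key : (MvPolynomial.map (PowerSeries.constantCoeff (R := K))).comp
        ((aeval (fun i => ∑ j, MvPolynomial.C ((M₀.map (PowerSeries.C (R := K))) i j)
          * MvPolynomial.X j) :
          MvPolynomial (Fin m) (PowerSeries K) →ₐ[PowerSeries K] _)).toRingHom
      = ((aeval (fun i => ∑ j, MvPolynomial.C (M₀ i j) * MvPolynomial.X j) :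
          MvPolynomial (Fin m) K →ₐ[K] _)).toRingHom.comp
        (MvPolynomial.map (PowerSeries.constantCoeff (R := K))) := by
    apply MvPolynomial.ringHom_ext
    · intro r
      simp [MvPolynomial.algebraMap_eq]
    · intro i
      simp [Matrix.map_apply, MvPolynomial.algebraMap_eq]
  exact RingHom.congr_fun key F

lemma aeval_linear_form {K : Type} [Field K] {m : ℕ} (M₀ : Matrix (Fin m) (Fin m) K)
    (L : MvPolynomial (Fin m) K) (hL : L.IsHomogeneous 1) (z : Fin m)
    (hv : Matrix.vecMul (fun i => MvPolynomial.coeff (Finsupp.single i 1) L) M₀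
      = Pi.single z 1) :
    aeval (fun i => ∑ j, MvPolynomial.C (M₀ i j) * MvPolynomial.X j) L
      = MvPolynomial.X z := by
  classical
  conv_lhs => rw [homog_one_decomp hL]
  rw [map_sum]
  simp only [map_mul, MvPolynomial.aeval_C, MvPolynomial.aeval_X,
    MvPolynomial.algebraMap_eq]
  calc
    ∑ i, MvPolynomial.C (MvPolynomial.coeff (Finsupp.single i 1) L)
        * ∑ j, MvPolynomial.C (M₀ i j) * MvPolynomial.X j
      = ∑ j, MvPolynomial.C
          (Matrix.vecMul (fun i => MvPolynomial.coeff (Finsupp.single i 1) L) M₀ j)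
          * MvPolynomial.X j := by
        simp only [Finset.mul_sum, ← mul_assoc, ← map_mul]
        rw [Finset.sum_comm]
        refine Finset.sum_congr rfl fun j _ => ?_
        rw [← Finset.sum_mul, ← map_sum]
        congr 1
    _ = MvPolynomial.X z := by
        rw [hv]
        simp [Pi.single_apply, apply_ite MvPolynomial.C, ite_mul, Finset.sum_ite_eq']

lemma X_dvd_coeff_of_mem_span {K : Type} [Field K] {m : ℕ}
    {p : MvPolynomial (Fin m) (PowerSeries K)} {z o : Fin m}
    (hmem : MvPolynomial.map (PowerSeries.constantCoeff (R := K)) p ∈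
      Ideal.span {MvPolynomial.X z, MvPolynomial.X o})
    (I : Fin m →₀ ℕ) (hz : I z = 0) (ho : I o = 0) :
    (PowerSeries.X : PowerSeries K) ∣ MvPolynomial.coeff I p := by
  classical
  rw [PowerSeries.X_dvd_iff]
  have himg : ({MvPolynomial.X z, MvPolynomial.X o} : Set (MvPolynomial (Fin m) K))
      = MvPolynomial.X '' {z, o} := by
    simp [Set.image_pair]
  rw [himg, MvPolynomial.mem_ideal_span_X_image] at hmem
  by_contra hne
  have hsup : I ∈ (MvPolynomial.map (PowerSeries.constantCoeff (R := K)) p).support := by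
    rw [MvPolynomial.mem_support_iff, MvPolynomial.coeff_map]
    exact hne
  obtain ⟨i, hi, hIi⟩ := hmem I hsup
  simp only [Set.mem_insert_iff, Set.mem_singleton_iff] at hi
  rcases hi with rfl | rfl
  · exact hIi hz
  · exact hIi ho

end Helpers

/-- For a semistable pencil of quadrics over `F_q[[t]]` (`q` odd, `n ≥ 5`)
whose generic fiber is a smooth complete intersection of two quadrics, the closed fiber
contains no linear subspace of dimension `n − 2` defined over `F_q`: there are no two linearly
independent linear forms over `F_q` such that both reductions `Q₀, Q₀'` lie in the ideal they
generate. -/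
theorem semistable_pencil_central_fiber_no_rational_codim_two_linear_space
    (Fq : Type) [Field Fq] [Fintype Fq] (hq : Odd (Fintype.card Fq))
    (n : ℕ) (hn : 5 ≤ n)
    (Q Q' : MvPolynomial (Fin (n + 1)) (PowerSeries Fq))
    (hQ : Q.IsHomogeneous 2) (hQ' : Q'.IsHomogeneous 2)
    (hss : PencilSemistable (PowerSeries.X : PowerSeries Fq) 2 Q Q')
    (hsmooth : SmoothCIGenericFiber Fq Q Q') :
    ¬ ∃ L₁ L₂ : MvPolynomial (Fin (n + 1)) Fq,
      L₁.IsHomogeneous 1 ∧ L₂.IsHomogeneous 1 ∧ LinearIndependent Fq ![L₁, L₂] ∧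
      MvPolynomial.map (PowerSeries.constantCoeff : PowerSeries Fq →+* Fq) Q ∈
        Ideal.span {L₁, L₂} ∧
      MvPolynomial.map (PowerSeries.constantCoeff : PowerSeries Fq →+* Fq) Q' ∈
        Ideal.span {L₁, L₂} := by
  rintro ⟨L₁, L₂, h1, h2, hli, hm1, hm2⟩
  classical
  have h01 : (0 : Fin (n + 1)) ≠ 1 := by
    intro h
    have h' := congrArg Fin.val h
    rw [Fin.val_zero, Fin.val_one'] at h'
    rw [Nat.mod_eq_of_lt (by omega)] at h'
    exact one_ne_zero h'.symm
  set v₁ : Fin (n + 1) → Fq := fun i => MvPolynomial.coeff (Finsupp.single i 1) L₁ with hv1d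
  set v₂ : Fin (n + 1) → Fq := fun i => MvPolynomial.coeff (Finsupp.single i 1) L₂ with hv2d
  have hliv : LinearIndependent Fq ![v₁, v₂] := by
    rw [Fintype.linearIndependent_iff] at hli ⊢
    intro g hg
    have hg' : ∀ i, g 0 * v₁ i + g 1 * v₂ i = 0 := by
      intro i
      have h := congrFun hg i
      simpa [Fin.sum_univ_two] using h
    have hhom : (g 0 • L₁ + g 1 • L₂).IsHomogeneous 1 :=
      Submodule.add_mem (homogeneousSubmodule (Fin (n + 1)) Fq 1)
        (Submodule.smul_mem _ _ h1) (Submodule.smul_mem _ _ h2)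
    have hP : g 0 • L₁ + g 1 • L₂ = 0 := by
      rw [homog_one_decomp hhom]
      refine Finset.sum_eq_zero fun i _ => ?_
      have hc : MvPolynomial.coeff (Finsupp.single i 1) (g 0 • L₁ + g 1 • L₂) = 0 := by
        rw [MvPolynomial.coeff_add, MvPolynomial.coeff_smul, MvPolynomial.coeff_smul]
        simpa [smul_eq_mul] using hg' i
      rw [hc, map_zero, zero_mul]
    intro i
    refine hli g ?_ i
    simpa [Fin.sum_univ_two] using hP
  obtain ⟨M₀, hdet, hvm1, hvm2⟩ := exists_matrix_vecMul 0 1 h01 v₁ v₂ hliv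
  set M : Matrix (Fin (n + 1)) (Fin (n + 1)) (PowerSeries Fq) :=
    M₀.map (PowerSeries.C (R := Fq)) with hMd
  have hdetM : IsUnit M.det := by
    rw [hMd]
    have hmm : M₀.map ⇑(PowerSeries.C (R := Fq)) = (PowerSeries.C (R := Fq)).mapMatrix M₀ := rfl
    rw [hmm, ← RingHom.map_det]
    exact hdet.map _
  have hspan : ∀ F : MvPolynomial (Fin (n + 1)) (PowerSeries Fq),
      MvPolynomial.map (PowerSeries.constantCoeff (R := Fq)) F ∈ Ideal.span {L₁, L₂} →
      MvPolynomial.map (PowerSeries.constantCoeff (R := Fq)) (changeCoords M F) ∈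
        Ideal.span ({MvPolynomial.X 0, MvPolynomial.X 1} :
          Set (MvPolynomial (Fin (n + 1)) Fq)) := by
    intro F hF
    rw [hMd, changeCoords_map_constantCoeff]
    obtain ⟨a, b, hab⟩ := Ideal.mem_span_pair.mp hF
    rw [← hab, map_add, map_mul, map_mul,
      aeval_linear_form M₀ L₁ h1 0 hvm1, aeval_linear_form M₀ L₂ h2 1 hvm2]
    exact Ideal.add_mem _
      (Ideal.mul_mem_left _ _ (Ideal.subset_span (by simp)))
      (Ideal.mul_mem_left _ _ (Ideal.subset_span (by simp)))
  have hQ0 := hspan Q hm1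
  have hQ'0 := hspan Q' hm2
  set w : Fin (n + 1) → ℤ := fun j => (if j = 0 then 1 else 0) + (if j = 1 then 1 else 0)
    with hwd
  have hww : ∀ I J : Fin (n + 1) →₀ ℕ,
      ∑ j, w j * ((I j : ℤ) + (J j : ℤ))
        = ((I 0 : ℤ) + (J 0 : ℤ)) + ((I 1 : ℤ) + (J 1 : ℤ)) := by
    intro I J
    rw [hwd]
    simp only [add_mul, ite_mul, one_mul, zero_mul]
    rw [Finset.sum_add_distrib, Finset.sum_ite_eq', Finset.sum_ite_eq']
    simp
  have hdvdI : ∀ I : Fin (n + 1) →₀ ℕ, I 0 = 0 → I 1 = 0 →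
      ((PowerSeries.X : PowerSeries Fq) ∣ MvPolynomial.coeff I (changeCoords M Q) ∧
       (PowerSeries.X : PowerSeries Fq) ∣ MvPolynomial.coeff I (changeCoords M Q')) :=
    fun I hz ho =>
      ⟨X_dvd_coeff_of_mem_span hQ0 I hz ho, X_dvd_coeff_of_mem_span hQ'0 I hz ho⟩
  have hmult : PencilMultGE (PowerSeries.X : PowerSeries Fq)
      (changeCoords M Q) (changeCoords M Q') w 2 := by
    intro I J _ _ k hk
    rw [hww I J] at hk
    have hk2 : k + (I 0 + J 0) + (I 1 + J 1) ≤ 2 := by omega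
    unfold wedgeCoeff
    rcases k with _ | _ | _ | k
    · simpa using one_dvd _
    · have hcase : (I 0 = 0 ∧ I 1 = 0) ∨ (J 0 = 0 ∧ J 1 = 0) := by omega
      rw [pow_one]
      rcases hcase with ⟨hz, ho⟩ | ⟨hz, ho⟩
      · obtain ⟨d1, d2⟩ := hdvdI I hz ho
        exact dvd_sub (d1.mul_right _) (d2.mul_left _)
      · obtain ⟨d1, d2⟩ := hdvdI J hz ho
        exact dvd_sub (d2.mul_left _) (d1.mul_right _)
    · have h4 : I 0 = 0 ∧ I 1 = 0 ∧ J 0 = 0 ∧ J 1 = 0 := by omega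
      obtain ⟨hI0, hI1, hJ0, hJ1⟩ := h4
      obtain ⟨dIF, dIG⟩ := hdvdI I hI0 hI1
      obtain ⟨dJF, dJG⟩ := hdvdI J hJ0 hJ1
      rw [pow_two]
      exact dvd_sub (mul_dvd_mul dIF dJG) (mul_dvd_mul dJF dIG)
    · exfalso; omega
  have hfin := hss M hdetM w 2 hmult
  have hw2 : ∑ j, w j = 2 := by
    rw [hwd]
    rw [Finset.sum_add_distrib, Finset.sum_ite_eq', Finset.sum_ite_eq']
    simp
  rw [hw2] at hfin
  push_cast at hfin
  omega
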